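/- arXiv:2107.06909 — 3 statements merged into one kernel-verified Lean document; each statement's English description precedes it below -/
import Mathlib

section
/- Let X and Y be topological spaces and let (H_i)_{i\ge 1} be continuous maps H_i : X \times [0,1] \to Y with H_i(x,1) = H_{i+1}(x,0) for all x and i. Suppose in addition that for every p \in X there exist an open neighborhood U of p and an integer N \ge 1 such that H_j(x,t) = H_N(x,0) for all j \ge N, all x \in U, and all t \in [0,1]. Then the map H : X \times [0,1) \to Y defined piecewise by H(x,t) = H_i(x,\zeta_i(t)) for t \in I_i extends to a continuous map \bar H : X \times [0,1] \to Y, where \bar H(x,1) = H_N(x,0) for any pair (U,N) as above with x \in U (this value is independent of the choice of such a pair). -/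
/-!
STATEMENT 1: Under the additional local stabilization hypothesis, the glued
map `H : X × [0,1] → Y` extends to a continuous map `H̄ : X × [0,1] → Y`
with `H̄(x,1) = H_N(x,0)` for any admissible pair `(U, N)` with `x ∈ U`.
-/

open Set

lemma ghe_exists_idx (t : ℝ) (h : t < 1) : ∃ n : ℕ, t < 1 - (1/2:ℝ)^(n+1) := by
  obtain ⟨n, hn⟩ := exists_pow_lt_of_lt_one (sub_pos.2 h) (by norm_num : (1/2:ℝ) < 1)
  have h2 : (1/2:ℝ)^(n+1) ≤ (1/2:ℝ)^n :=
    pow_le_pow_of_le_one (by norm_num) (by norm_num) (Nat.le_succ n)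
  exact ⟨n, by linarith⟩

noncomputable def gheIdx (t : ℝ) : ℕ :=
  if h : t < 1 then Nat.find (ghe_exists_idx t h) + 1 else 0

lemma gheIdx_pos {t : ℝ} (h : t < 1) : 1 ≤ gheIdx t := by
  rw [gheIdx, dif_pos h]; omega

lemma gheIdx_lt {t : ℝ} (h : t < 1) : t < 1 - (1/2:ℝ)^(gheIdx t) := by
  rw [gheIdx, dif_pos h]
  exact Nat.find_spec (ghe_exists_idx t h)

lemma gheIdx_ge {t : ℝ} (h0 : 0 ≤ t) (h : t < 1) :
    1 - (1/2:ℝ)^(gheIdx t - 1) ≤ t := by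
  rw [gheIdx, dif_pos h]
  simp only [Nat.add_sub_cancel]
  rcases Nat.eq_zero_or_pos (Nat.find (ghe_exists_idx t h)) with h0' | h0'
  · rw [h0']; simpa using h0
  · obtain ⟨m, hm⟩ := Nat.exists_eq_succ_of_ne_zero (Nat.pos_iff_ne_zero.mp h0')
    rw [hm]
    have := Nat.find_min (ghe_exists_idx t h) (hm ▸ Nat.lt_succ_self m)
    simpa [Nat.succ_eq_add_one] using not_lt.mp this

/-- Pasting of two relatively closed pieces (intervals) in the second factor. -/
lemma ghe_union {X Y : Type*} [TopologicalSpace X] [TopologicalSpace Y]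
    {f : X × ℝ → Y} {s : Set X} {a b c : ℝ} (hab : a ≤ b) (hbc : b ≤ c)
    (h1 : ContinuousOn f (s ×ˢ Icc a b)) (h2 : ContinuousOn f (s ×ˢ Icc b c)) :
    ContinuousOn f (s ×ˢ Icc a c) := by
  intro p hp
  have hp1 : p.1 ∈ s := hp.1
  have hp2 : p.2 ∈ Icc a c := hp.2
  have hsplit : s ×ˢ Icc a c = (s ×ˢ Icc a b) ∪ (s ×ˢ Icc b c) := by
    rw [← Icc_union_Icc_eq_Icc hab hbc, prod_union]
  rw [hsplit]
  have hA : ContinuousWithinAt f (s ×ˢ Icc a b) p := by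
    rcases le_or_gt p.2 b with h | h
    · exact h1 p ⟨hp1, hp2.1, h⟩
    · apply continuousWithinAt_of_notMem_closure
      intro hc
      have hsub : closure (s ×ˢ Icc a b) ⊆ closure s ×ˢ Icc a b := by
        rw [closure_prod_eq, isClosed_Icc.closure_eq]
      exact absurd (hsub hc).2.2 (not_le.mpr h)
  have hB : ContinuousWithinAt f (s ×ˢ Icc b c) p := by
    rcases le_or_gt b p.2 with h | h
    · exact h2 p ⟨hp1, h, hp2.2⟩
    · apply continuousWithinAt_of_notMem_closure
      intro hc
      have hsub : closure (s ×ˢ Icc b c) ⊆ closure s ×ˢ Icc b c := by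
        rw [closure_prod_eq, isClosed_Icc.closure_eq]
      exact absurd (hsub hc).2.1 (not_le.mpr h)
  exact hA.union hB

theorem glued_homotopy_extends
    {X Y : Type*} [TopologicalSpace X] [TopologicalSpace Y]
    (H : ℕ → X → ℝ → Y)
    (hcont : ∀ i, 1 ≤ i →
      ContinuousOn (fun p : X × ℝ => H i p.1 p.2) (univ ×ˢ Icc (0:ℝ) 1))
    (hcompat : ∀ i, 1 ≤ i → ∀ x : X, H i x 1 = H (i + 1) x 0)
    (hstab : ∀ p : X, ∃ U : Set X, IsOpen U ∧ p ∈ U ∧ ∃ N : ℕ, 1 ≤ N ∧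
      ∀ j, N ≤ j → ∀ x ∈ U, ∀ t ∈ Icc (0:ℝ) 1, H j x t = H N x 0) :
    ∃ Hbar : X × (Icc (0:ℝ) 1) → Y,
      Continuous Hbar ∧
      (∀ i, 1 ≤ i → ∀ (x : X) (t : Icc (0:ℝ) 1),
        (t : ℝ) ∈ Icc (1 - (1/2 : ℝ) ^ (i - 1)) (1 - (1/2 : ℝ) ^ i) →
        Hbar (x, t) = H i x ((2 : ℝ) ^ i * ((t : ℝ) - (1 - (1/2 : ℝ) ^ (i - 1))))) ∧
      (∀ (U : Set X) (N : ℕ), IsOpen U → 1 ≤ N →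
        (∀ j, N ≤ j → ∀ x ∈ U, ∀ t ∈ Icc (0:ℝ) 1, H j x t = H N x 0) →
        ∀ x ∈ U, Hbar (x, ⟨1, right_mem_Icc.mpr zero_le_one⟩) = H N x 0) := by
  classical
  choose U hUo hmem N hN1 hst using hstab
  -- the global function on `X × ℝ`
  obtain ⟨F, hF⟩ : ∃ F : X → ℝ → Y, F = fun x t =>
      if h : t < 1 then
        H (gheIdx t) x ((2:ℝ)^(gheIdx t) * (t - (1 - (1/2:ℝ)^(gheIdx t - 1))))
      else H (N x) x 0 := ⟨_, rfl⟩
  -- well-definedness of the value at `t = 1`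
  have wd : ∀ (U' : Set X) (N' : ℕ), 1 ≤ N' →
      (∀ j, N' ≤ j → ∀ x ∈ U', ∀ t ∈ Icc (0:ℝ) 1, H j x t = H N' x 0) →
      ∀ x ∈ U', H (N x) x 0 = H N' x 0 := by
    intro U' N' _ hst' x hx
    have h0 : (0:ℝ) ∈ Icc (0:ℝ) 1 := ⟨le_refl _, zero_le_one⟩
    have e1 : H (max N' (N x)) x 0 = H N' x 0 := hst' _ (le_max_left _ _) x hx 0 h0
    have e2 : H (max N' (N x)) x 0 = H (N x) x 0 :=
      hst x _ (le_max_right _ _) x (hmem x) 0 h0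
    rw [← e1, e2]
  -- basic identity: 2^(k+1) * ((1/2)^k - (1/2)^(k+1)) = 1
  have key : ∀ k : ℕ, (2:ℝ)^(k+1) * ((1/2:ℝ)^k - (1/2:ℝ)^(k+1)) = 1 := by
    intro k
    have h1 : (2:ℝ)^k * (1/2:ℝ)^k = 1 := by
      rw [← mul_pow]; norm_num
    rw [pow_succ, pow_succ]; nlinarith
  have key2 : ∀ k : ℕ, (2:ℝ)^(k+1) * (1/2:ℝ)^(k+1) = 1 := by
    intro k; rw [← mul_pow]; norm_num
  -- the range of the rescaled parameter
  have zeta_mem : ∀ t : ℝ, 0 ≤ t → t < 1 →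
      (2:ℝ)^(gheIdx t) * (t - (1 - (1/2:ℝ)^(gheIdx t - 1))) ∈ Icc (0:ℝ) 1 := by
    intro t h0 h1
    have hge := gheIdx_ge h0 h1
    have hlt := gheIdx_lt h1
    obtain ⟨k, hk⟩ : ∃ k, gheIdx t = k + 1 :=
      ⟨gheIdx t - 1, by have := gheIdx_pos h1; omega⟩
    rw [hk] at hge hlt ⊢
    simp only [Nat.add_sub_cancel] at hge ⊢
    constructor
    · have : (0:ℝ) ≤ t - (1 - (1/2:ℝ)^k) := by linarith
      positivity
    · nlinarith [key k, pow_pos (by norm_num : (0:ℝ) < 2) (k+1)]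
  -- agreement with the `i`-th piece on the interval `I_i`
  have agree : ∀ i, 1 ≤ i → ∀ (x : X) (t : ℝ), 0 ≤ t →
      t ∈ Icc (1 - (1/2:ℝ)^(i-1)) (1 - (1/2:ℝ)^i) →
      F x t = H i x ((2:ℝ)^i * (t - (1 - (1/2:ℝ)^(i-1)))) := by
    intro i hi x t h0 ht
    have hipos : (0:ℝ) < (1/2:ℝ)^i := by positivity
    have ht1 : t < 1 := lt_of_le_of_lt ht.2 (by linarith)
    have hj1 : 1 ≤ gheIdx t := gheIdx_pos ht1
    have hjlt : t < 1 - (1/2:ℝ)^(gheIdx t) := gheIdx_lt ht1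
    have hjge : 1 - (1/2:ℝ)^(gheIdx t - 1) ≤ t := gheIdx_ge h0 ht1
    rw [hF]
    simp only []
    rw [dif_pos ht1]
    obtain ⟨j, hj⟩ : ∃ j, gheIdx t = j := ⟨_, rfl⟩
    rw [hj] at hj1 hjlt hjge ⊢
    -- i ≤ j
    have hij : i ≤ j := by
      have : (1/2:ℝ)^j < (1/2:ℝ)^(i-1) := by linarith [ht.1]
      have := (pow_lt_pow_iff_right_of_lt_one₀ (by norm_num : (0:ℝ) < 1/2)
        (by norm_num : (1/2:ℝ) < 1)).mp this
      omega
    -- j ≤ i+1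
    have hji : j ≤ i + 1 := by
      have : (1/2:ℝ)^i ≤ (1/2:ℝ)^(j-1) := by linarith [ht.2]
      have : ¬ ((1/2:ℝ)^(j-1) < (1/2:ℝ)^i) := not_lt.mpr this
      have h4 : ¬ (i < j - 1) := fun h => this ((pow_lt_pow_iff_right_of_lt_one₀
        (by norm_num : (0:ℝ) < 1/2) (by norm_num : (1/2:ℝ) < 1)).mpr h)
      omega
    rcases Nat.eq_or_lt_of_le hij with heq | hlt'
    · rw [← heq]
    · -- then j = i + 1 and t is the common endpoint
      have hji' : j = i + 1 := by omega
      obtain ⟨k, hk⟩ : ∃ k, i = k + 1 := ⟨i - 1, by omega⟩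
      have hteq : t = 1 - (1/2:ℝ)^i := by
        rw [hji'] at hjge
        simp only [Nat.add_sub_cancel] at hjge
        linarith [ht.2]
      have hval1 : (2:ℝ)^j * (t - (1 - (1/2:ℝ)^(j-1))) = 0 := by
        rw [hji', hteq]
        simp only [Nat.add_sub_cancel]
        ring
      have hval2 : (2:ℝ)^i * (t - (1 - (1/2:ℝ)^(i-1))) = 1 := by
        rw [hteq, hk]
        simp only [Nat.add_sub_cancel]
        linear_combination key k
      rw [hval1, hval2, hji', hcompat i hi x]
  -- continuity of the glued map on `[0, 1 - 2^{-i}]`, by induction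
  have pieceCont : ∀ i : ℕ,
      ContinuousOn (fun p : X × ℝ => F p.1 p.2)
        ((univ : Set X) ×ˢ Icc (0:ℝ) (1 - (1/2:ℝ)^i)) := by
    intro i
    induction i with
    | zero =>
      simp only [pow_zero, sub_self]
      apply ContinuousOn.congr
        (f := fun p : X × ℝ => H 1 p.1 ((2:ℝ) * p.2))
      · apply (hcont 1 le_rfl).comp
          (Continuous.continuousOn
            (continuous_fst.prodMk (continuous_const.mul continuous_snd)))
        intro p hp
        have : p.2 = 0 := le_antisymm hp.2.2 hp.2.1
        exact ⟨mem_univ _, by simp [this], by simp [this]⟩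
      · intro p hp
        have hp2 : p.2 = 0 := le_antisymm hp.2.2 hp.2.1
        have hag := agree 1 le_rfl p.1 p.2 (le_of_eq hp2.symm)
          (by rw [hp2]; constructor <;> norm_num)
        show F p.1 p.2 = H 1 p.1 ((2:ℝ) * p.2)
        rw [hag, hp2]
        norm_num
    | succ i ih =>
      have hb0 : (0:ℝ) ≤ 1 - (1/2:ℝ)^i := by
        have : (1/2:ℝ)^i ≤ 1 := pow_le_one₀ (by norm_num) (by norm_num)
        linarith
      have hbc : (1:ℝ) - (1/2:ℝ)^i ≤ 1 - (1/2:ℝ)^(i+1) := by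
        have : (1/2:ℝ)^(i+1) ≤ (1/2:ℝ)^i :=
          pow_le_pow_of_le_one (by norm_num) (by norm_num) (Nat.le_succ i)
        linarith
      apply ghe_union hb0 hbc ih
      apply ContinuousOn.congr
        (f := fun p : X × ℝ => H (i+1) p.1 ((2:ℝ)^(i+1) * (p.2 - (1 - (1/2:ℝ)^i))))
      · apply (hcont (i+1) (Nat.le_add_left 1 i)).comp
          (Continuous.continuousOn
            (continuous_fst.prodMk (continuous_const.mul
              (continuous_snd.sub continuous_const))))
        intro p hp
        refine ⟨mem_univ _, ?_, ?_⟩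
        · show (0:ℝ) ≤ (2:ℝ)^(i+1) * (p.2 - (1 - (1/2:ℝ)^i))
          have h1 := hp.2.1
          exact mul_nonneg (by positivity) (by linarith)
        · show (2:ℝ)^(i+1) * (p.2 - (1 - (1/2:ℝ)^i)) ≤ 1
          have h2 := hp.2.2
          nlinarith [key2 i, key i, pow_pos (by norm_num : (0:ℝ) < 2) (i+1)]
      · intro p hp
        have := agree (i+1) (Nat.le_add_left 1 i) p.1 p.2 (hb0.trans hp.2.1)
          (by simpa using hp.2)
        simpa using this
  -- the extension
  refine ⟨fun q => F q.1 (q.2 : ℝ), ?_, ?_, ?_⟩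
  · rw [continuous_iff_continuousAt]
    intro q
    set N₀ := N q.1 with hN₀
    have hb0 : (0:ℝ) ≤ 1 - (1/2:ℝ)^N₀ := by
      have : (1/2:ℝ)^N₀ ≤ 1 := pow_le_one₀ (by norm_num) (by norm_num)
      linarith
    have hb1 : (1:ℝ) - (1/2:ℝ)^N₀ ≤ 1 := by
      have : (0:ℝ) < (1/2:ℝ)^N₀ := by positivity
      linarith
    -- continuity of F on U q.1 × [0,1]
    have contOn : ContinuousOn (fun p : X × ℝ => F p.1 p.2) (U q.1 ×ˢ Icc (0:ℝ) 1) := by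
      apply ghe_union hb0 hb1
      · exact (pieceCont N₀).mono (prod_mono (subset_univ _) subset_rfl)
      · apply ContinuousOn.congr (f := fun p : X × ℝ => H N₀ p.1 0)
        · apply (hcont N₀ (hN1 q.1)).comp
            (Continuous.continuousOn
              (continuous_fst.prodMk continuous_const))
          intro p _
          exact ⟨mem_univ _, le_refl _, zero_le_one⟩
        · intro p hp
          rcases lt_or_ge p.2 1 with h1 | h1
          · -- stabilized region, t < 1
            have h0 : (0:ℝ) ≤ p.2 := hb0.trans hp.2.1
            have hjlt := gheIdx_lt h1
            have hjN : N₀ ≤ gheIdx p.2 := by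
              have : (1/2:ℝ)^(gheIdx p.2) < (1/2:ℝ)^N₀ := by linarith [hp.2.1]
              exact le_of_lt ((pow_lt_pow_iff_right_of_lt_one₀
                (by norm_num : (0:ℝ) < 1/2) (by norm_num : (1/2:ℝ) < 1)).mp this)
            have hz := zeta_mem p.2 h0 h1
            simp only [hF, dif_pos h1]
            exact hst q.1 (gheIdx p.2) hjN p.1 hp.1 _ hz
          · -- t = 1
            have hlt : ¬ p.2 < 1 := not_lt.mpr h1
            simp only [hF, dif_neg hlt]
            exact wd (U q.1) N₀ (hN1 q.1) (hst q.1) p.1 hp.1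
    -- transfer to the subtype
    have e_cont : Continuous (fun r : X × (Icc (0:ℝ) 1) => (r.1, (r.2 : ℝ))) :=
      continuous_fst.prodMk (continuous_subtype_val.comp continuous_snd)
    have contOn' : ContinuousOn (fun r : X × (Icc (0:ℝ) 1) => F r.1 (r.2 : ℝ))
        (U q.1 ×ˢ (univ : Set (Icc (0:ℝ) 1))) := by
      apply ContinuousOn.comp contOn e_cont.continuousOn
      intro r hr
      exact ⟨hr.1, r.2.2⟩
    exact contOn'.continuousAt
      (((hUo q.1).prod isOpen_univ).mem_nhds ⟨hmem q.1, mem_univ _⟩)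
  · intro i hi x t ht
    exact agree i hi x (t : ℝ) t.2.1 ht
  · intro U' N' _ hN'1 hst' x hx
    simp only [hF]
    rw [dif_neg (lt_irrefl (1:ℝ))]
    exact wd U' N' hN'1 hst' x hx
end

section
/- For every m \ge 1, the set A_m is disjoint from the closure (in \mathbb{R}^2) of the union of all the other segments: A_m \cap \overline{\bigcup_{n \ge 1,\ n \ne m} A_n} = \emptyset. -/
/-!
STATEMENT 7: For the open radial segments `A_n` at angles `1/n`, each `A_m`
(`m ≥ 1`) is disjoint from the closure of the union of the other segments.
-/

/-- The open straight segment from the origin to `(cos(1/n), sin(1/n))`. -/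
def raySeg (n : ℕ) : Set (ℝ × ℝ) :=
  {p | ∃ t : ℝ, 0 < t ∧ t < 1 ∧
    p = (t * Real.cos (1 / (n : ℝ)), t * Real.sin (1 / (n : ℝ)))}

set_option maxHeartbeats 1000000 in
theorem raySeg_disjoint_closure_of_others :
    ∀ m : ℕ, 1 ≤ m →
      raySeg m ∩ closure (⋃ (n : ℕ) (_ : 1 ≤ n) (_ : n ≠ m), raySeg n) = ∅ := by
  intro m hm
  ext p
  simp only [Set.mem_inter_iff, Set.mem_empty_iff_false, iff_false, not_and]
  rintro ⟨t, ht0, ht1, rfl⟩ hcl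
  set M : ℝ := (m : ℝ) with hM
  have hM1 : (1:ℝ) ≤ M := by rw [hM]; exact_mod_cast hm
  have hM0 : (0:ℝ) < M := by linarith
  set δ : ℝ := 1 / (M * (M + 1)) with hδ
  have hδ0 : 0 < δ := by positivity
  have hδhalf : δ ≤ 1/2 := by
    rw [hδ, div_le_div_iff₀ (by positivity) (by norm_num)]
    nlinarith
  have hπ : (3:ℝ) ≤ Real.pi := Real.pi_gt_three.le
  have hsinδ : 0 < Real.sin δ := Real.sin_pos_of_pos_of_lt_pi hδ0 (by linarith)
  have hε : 0 < t * Real.sin δ / 2 := by positivity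
  rw [Metric.mem_closure_iff] at hcl
  obtain ⟨q, hq, hdist⟩ := hcl _ hε
  simp only [Set.mem_iUnion, raySeg, Set.mem_setOf_eq] at hq
  obtain ⟨n, hn1, hnm, s, hs0, hs1, rfl⟩ := hq
  set N : ℝ := (n : ℝ) with hN
  have hN1 : (1:ℝ) ≤ N := by rw [hN]; exact_mod_cast hn1
  have hN0 : (0:ℝ) < N := by linarith
  set x : ℝ := 1/M - 1/N with hx
  -- angle gap
  have hgap : δ ≤ |x| := by
    rcases lt_or_gt_of_ne hnm with h | h
    · have hNM : N + 1 ≤ M := by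
        rw [hN, hM]; exact_mod_cast Nat.succ_le_of_lt h
      rw [le_abs]
      right
      have hMne : M - 1 ≠ 0 := ne_of_gt (by linarith)
      have e1 : 1/(M-1) - 1/M = 1/((M-1)*M) := by
        field_simp
        ring
      have e2 : (1:ℝ)/(M*(M+1)) ≤ 1/((M-1)*M) := by
        apply one_div_le_one_div_of_le (by nlinarith) (by nlinarith)
      have h1 : 1/(M-1) ≤ 1/N :=
        one_div_le_one_div_of_le (by linarith) (by linarith)
      rw [hx, hδ]
      linarith
    · have hNM : M + 1 ≤ N := by
        rw [hN, hM]; exact_mod_cast Nat.succ_le_of_lt h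
      rw [le_abs]
      left
      have e1 : 1/M - 1/(M+1) = 1/(M*(M+1)) := by
        field_simp
        ring
      have h1 : 1/N ≤ 1/(M+1) :=
        one_div_le_one_div_of_le (by linarith) hNM
      rw [hx, hδ]
      linarith
  have habs1 : |x| ≤ 1 := by
    have h1 : 1/M ≤ 1 := by rw [div_le_one hM0]; exact hM1
    have h2 : 1/N ≤ 1 := by rw [div_le_one hN0]; exact hN1
    have h3 : (0:ℝ) < 1/M := by positivity
    have h4 : (0:ℝ) < 1/N := by positivity
    rw [abs_le]; constructor <;> rw [hx] <;> linarith
  -- sin monotonicity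
  have hsinle : Real.sin δ ≤ Real.sin |x| :=
    Real.strictMonoOn_sin.monotoneOn ⟨by linarith, by linarith⟩
      ⟨by linarith [abs_nonneg x], by linarith⟩ hgap
  have hsq : Real.sin x ^ 2 = Real.sin |x| ^ 2 := by
    rcases abs_cases x with ⟨h, _⟩ | ⟨h, _⟩ <;> rw [h]
    rw [Real.sin_neg]; ring
  -- law of cosines lower bound
  set a : ℝ := t * Real.cos (1/M) - s * Real.cos (1/N) with ha
  set b : ℝ := t * Real.sin (1/M) - s * Real.sin (1/N) with hb
  have hid : a ^ 2 + b ^ 2 = t^2 + s^2 - 2*t*s*Real.cos x := by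
    rw [ha, hb, hx, Real.cos_sub]
    linear_combination t^2 * Real.sin_sq_add_cos_sq (1/M)
      + s^2 * Real.sin_sq_add_cos_sq (1/N)
  have hkey : t ^ 2 * Real.sin x ^ 2 ≤ a ^ 2 + b ^ 2 := by
    rw [hid]
    nlinarith [sq_nonneg (s - t * Real.cos x), Real.sin_sq_add_cos_sq x]
  -- distance bounds
  rw [Prod.dist_eq] at hdist
  have hda : |a| < t * Real.sin δ / 2 := by
    have := (max_lt_iff.mp hdist).1
    rwa [Real.dist_eq, ← ha] at this
  have hdb : |b| < t * Real.sin δ / 2 := by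
    have := (max_lt_iff.mp hdist).2
    rwa [Real.dist_eq, ← hb] at this
  have ha2 : a ^ 2 < (t * Real.sin δ / 2) ^ 2 := by
    rw [← sq_abs]; exact pow_lt_pow_left₀ hda (abs_nonneg a) (by norm_num)
  have hb2 : b ^ 2 < (t * Real.sin δ / 2) ^ 2 := by
    rw [← sq_abs]; exact pow_lt_pow_left₀ hdb (abs_nonneg b) (by norm_num)
  have hts : 0 < t * Real.sin δ := by positivity
  have hmono : (t * Real.sin δ) ^ 2 ≤ (t * Real.sin |x|) ^ 2 := by
    apply pow_le_pow_left₀ (by positivity)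
    exact mul_le_mul_of_nonneg_left hsinle ht0.le
  have hsq' : t^2 * Real.sin x ^ 2 = t^2 * Real.sin |x| ^ 2 := by rw [hsq]
  clear_value a b x δ M N
  nlinarith [hkey, hsq', hmono, ha2, hb2, mul_pos hts hts]
end

section
/- Let P = \{(0,0),\ (1,0)\} \cup \{ (\cos(1/n), \sin(1/n)) : n \ge 1 \} \subseteq \mathbb{R}^2 and let S = \mathbb{R}^2 \setminus P with the subspace topology (each A_n is a subset of S). Then there is no homeomorphism h : S \to S such that h(A_n) = A_n for all n \ge 2 and such that h(A_1) contains a point (x, 0) with 0 < x < 1. -/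
/-- The set of punctures: the origin, `(1,0)`, and the endpoints
`(cos(1/n), sin(1/n))` on the unit circle. -/
def punctures : Set (ℝ × ℝ) :=
  {((0:ℝ), (0:ℝ)), ((1:ℝ), (0:ℝ))} ∪
    {p | ∃ n : ℕ, 1 ≤ n ∧ p = (Real.cos (1 / (n : ℝ)), Real.sin (1 / (n : ℝ)))}

open Filter Topology

lemma aux_bounds {n : ℕ} (hn : 1 ≤ n) :
    0 < 1 / (n:ℝ) ∧ 1 / (n:ℝ) ≤ 1 := by
  have hn0 : (0:ℝ) < n := by exact_mod_cast hn
  refine ⟨by positivity, ?_⟩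
  rw [div_le_one hn0]; exact_mod_cast hn

lemma sin_pos_aux {n : ℕ} (hn : 1 ≤ n) : 0 < Real.sin (1/(n:ℝ)) := by
  obtain ⟨h1, h2⟩ := aux_bounds hn
  exact Real.sin_pos_of_pos_of_lt_pi h1 (by linarith [Real.pi_gt_three])

lemma not_puncture {n : ℕ} (hn : 1 ≤ n) {t : ℝ} (ht0 : 0 < t) (ht1 : t < 1) :
    (t * Real.cos (1 / (n:ℝ)), t * Real.sin (1 / (n:ℝ))) ∉ punctures := by
  obtain ⟨h1, h2⟩ := aux_bounds hn
  have hsin := sin_pos_aux hn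
  have hcos : 0 < Real.cos (1/(n:ℝ)) :=
    Real.cos_pos_of_mem_Ioo ⟨by linarith [Real.pi_gt_three], by linarith [Real.pi_gt_three]⟩
  intro hmem
  simp only [punctures, Set.mem_union, Set.mem_insert_iff, Set.mem_singleton_iff,
    Set.mem_setOf_eq, Prod.mk.injEq] at hmem
  rcases hmem with (⟨ha, hb⟩ | ⟨ha, hb⟩) | ⟨m, hm, ha, hb⟩
  · nlinarith
  · nlinarith
  · have e1 : (t * Real.cos (1/(n:ℝ)))^2 + (t * Real.sin (1/(n:ℝ)))^2 = 1 := by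
      rw [ha, hb, add_comm]
      exact Real.sin_sq_add_cos_sq _
    have e2 := Real.sin_sq_add_cos_sq (1/(n:ℝ))
    have e3 : t^2 = 1 := by
      calc t^2 = t^2 * (Real.sin (1/(n:ℝ))^2 + Real.cos (1/(n:ℝ))^2) := by rw [e2, mul_one]
        _ = (t * Real.cos (1/(n:ℝ)))^2 + (t * Real.sin (1/(n:ℝ)))^2 := by ring
        _ = 1 := e1
    nlinarith

theorem no_homeomorphism_moving_first_arc :
    ¬ ∃ h : (puncturesᶜ : Set (ℝ × ℝ)) ≃ₜ (puncturesᶜ : Set (ℝ × ℝ)),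
      (∀ n : ℕ, 2 ≤ n →
        h '' {p : (puncturesᶜ : Set (ℝ × ℝ)) | (p : ℝ × ℝ) ∈ raySeg n} =
          {p : (puncturesᶜ : Set (ℝ × ℝ)) | (p : ℝ × ℝ) ∈ raySeg n}) ∧
      ∃ x : ℝ, 0 < x ∧ x < 1 ∧
        ∃ p : (puncturesᶜ : Set (ℝ × ℝ)),
          (p : ℝ × ℝ) ∈ raySeg 1 ∧ ((h p : ℝ × ℝ)) = (x, 0) := by
  rintro ⟨h, hfix, x, hx0, hx1, p, hp1, hpx⟩
  obtain ⟨t, ht0, ht1, hpt⟩ := hp1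
  have hqmem : ∀ n : ℕ,
      (x * Real.cos (1 / ((n+2 : ℕ) : ℝ)), x * Real.sin (1 / ((n+2 : ℕ) : ℝ)))
        ∈ (puncturesᶜ : Set (ℝ×ℝ)) :=
    fun n => not_puncture (by omega) hx0 hx1
  set q : ℕ → (puncturesᶜ : Set (ℝ×ℝ)) := fun n => ⟨_, hqmem n⟩ with hqdef
  -- the pullbacks lie on the corresponding segments
  have hrmem : ∀ n : ℕ, ∃ s : ℝ, 0 < s ∧ s < 1 ∧
      (h.symm (q n) : ℝ×ℝ) =
        (s * Real.cos (1 / ((n+2:ℕ):ℝ)), s * Real.sin (1 / ((n+2:ℕ):ℝ))) := by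
    intro n
    have hmem : q n ∈ {p : (puncturesᶜ : Set (ℝ × ℝ)) | (p : ℝ × ℝ) ∈ raySeg (n+2)} :=
      ⟨x, hx0, hx1, rfl⟩
    rw [← hfix (n+2) (by omega)] at hmem
    obtain ⟨r, hr, hrq⟩ := hmem
    have hsymm : h.symm (q n) = r := by rw [← hrq, Homeomorph.symm_apply_apply]
    rw [hsymm]
    exact hr
  have hlim0 : Tendsto (fun n : ℕ => 1 / ((n + 2 : ℕ) : ℝ)) atTop (𝓝 0) :=
    tendsto_one_div_atTop_nhds_zero_nat.comp (tendsto_add_atTop_nat 2)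
  have hlimq : Tendsto (fun n => (q n : ℝ × ℝ)) atTop (𝓝 ((h p : ℝ×ℝ))) := by
    rw [hpx]
    have hc : Tendsto (fun n : ℕ => x * Real.cos (1 / ((n+2:ℕ):ℝ))) atTop (𝓝 (x * 1)) := by
      have := ((Real.continuous_cos.tendsto 0).comp hlim0).const_mul x
      rwa [Real.cos_zero] at this
    have hs : Tendsto (fun n : ℕ => x * Real.sin (1 / ((n+2:ℕ):ℝ))) atTop (𝓝 (x * 0)) := by
      have := ((Real.continuous_sin.tendsto 0).comp hlim0).const_mul x
      rwa [Real.sin_zero] at this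
    have := hc.prodMk_nhds hs
    simpa [hqdef] using this
  have hlimr : Tendsto (fun n => ((h.symm (q n)) : ℝ × ℝ)) atTop (𝓝 (p : ℝ×ℝ)) := by
    have h1 : Tendsto q atTop (𝓝 (h p)) := tendsto_subtype_rng.mpr hlimq
    have h2 : Tendsto (fun n => h.symm (q n)) atTop (𝓝 (h.symm (h p))) :=
      (h.symm.continuous.tendsto _).comp h1
    rw [Homeomorph.symm_apply_apply] at h2
    exact tendsto_subtype_rng.mp h2
  have hlimy : Tendsto (fun n => ((h.symm (q n)) : ℝ × ℝ).2) atTop (𝓝 ((p:ℝ×ℝ).2)) :=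
    (continuous_snd.tendsto _).comp hlimr
  have hsqz : Tendsto (fun n => ((h.symm (q n)) : ℝ × ℝ).2) atTop (𝓝 0) := by
    apply tendsto_of_tendsto_of_tendsto_of_le_of_le (tendsto_const_nhds (x := (0:ℝ))) hlim0
    · intro n
      obtain ⟨s, hs0, hs1, he⟩ := hrmem n
      show (0:ℝ) ≤ ((h.symm (q n) : ℝ × ℝ)).2
      rw [he]
      have hsin := sin_pos_aux (n := n+2) (by omega)
      dsimp only
      positivity
    · intro n
      obtain ⟨s, hs0, hs1, he⟩ := hrmem n
      show ((h.symm (q n) : ℝ × ℝ)).2 ≤ 1 / ((n+2:ℕ):ℝ)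
      rw [he]
      dsimp only
      have hsin := sin_pos_aux (n := n+2) (by omega)
      obtain ⟨hb1, hb2⟩ := aux_bounds (n := n+2) (by omega)
      have hlt : Real.sin (1/((n+2:ℕ):ℝ)) < 1/((n+2:ℕ):ℝ) := Real.sin_lt hb1
      nlinarith
  have hzero : ((p:ℝ×ℝ)).2 = 0 := tendsto_nhds_unique hlimy hsqz
  rw [hpt] at hzero
  have hs1 : 0 < Real.sin (1/((1:ℕ):ℝ)) := sin_pos_aux le_rfl
  simp only [Nat.cast_one, div_one] at hs1 hzero
  nlinarith
end
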